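/- Let p be a prime and let n, H ≥ 1 be natural numbers. Then there exists a natural number N = N_p(n, H) such that for any permutations σ_1, …, σ_H of {1, …, n}, there exist subsets A_1, …, A_n of the group (ℤ/pℤ)^N such that for each 1 ≤ h ≤ H and all 1 ≤ j, k ≤ n, one has |hA_j| < |hA_k| if and only if σ_h(j) < σ_h(k). -/

import Mathlib

open Pointwise Finset

namespace Prop3Aux

/-! ### Generic pointwise lemmas -/

section Generic

variable {G : Type*} [AddCommMonoid G] [DecidableEq G]

lemma zero_mem_nsmul {A : Finset G} (h0 : (0 : G) ∈ A) (m : ℕ) : (0 : G) ∈ m • A := by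
  induction m with
  | zero => simp [zero_nsmul]
  | succ k ih =>
    rw [succ_nsmul]
    simpa using Finset.add_mem_add ih h0

lemma sum_mem_card_nsmul {ι : Type*} (I : Finset ι) (f : ι → G) {A : Finset G}
    (hf : ∀ i ∈ I, f i ∈ A) : (∑ i ∈ I, f i) ∈ I.card • A := by
  induction I using Finset.cons_induction with
  | empty => simp [zero_nsmul]
  | cons a s ha ih =>
    rw [Finset.sum_cons, Finset.card_cons, succ_nsmul, add_comm (f a)]
    exact Finset.add_mem_add (ih fun i hi => hf i (Finset.mem_cons_of_mem hi))
      (hf a (Finset.mem_cons_self a s))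

lemma image_nsmul_hom {G' : Type*} [AddCommMonoid G'] [DecidableEq G']
    (f : G ≃+ G') (A : Finset G) : ∀ m : ℕ, 1 ≤ m →
    (m • A).image f = m • (A.image f) := by
  intro m hm
  induction m with
  | zero => omega
  | succ k ih =>
    rcases Nat.eq_zero_or_pos k with hk | hk
    · subst hk; simp [one_nsmul]
    · rw [succ_nsmul, succ_nsmul, Finset.image_add, ih hk]

end Generic

section GenericGroup

variable {G : Type*} [AddCommGroup G] [DecidableEq G] [Fintype G]

lemma add_univ_eq {X : Finset G} (hX : X.Nonempty) : X + (univ : Finset G) = univ := by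
  apply Finset.Subset.antisymm (Finset.subset_univ _)
  intro g _
  obtain ⟨x, hx⟩ := hX
  have : x + (g - x) ∈ X + (univ : Finset G) :=
    Finset.add_mem_add hx (Finset.mem_univ _)
  simpa using this

lemma nsmul_univ_eq : ∀ m : ℕ, 1 ≤ m → m • (univ : Finset G) = univ := by
  intro m hm
  induction m with
  | zero => omega
  | succ k ih =>
    rcases Nat.eq_zero_or_pos k with hk | hk
    · subst hk; simp [one_nsmul]
    · rw [succ_nsmul, ih hk, add_univ_eq Finset.univ_nonempty]

lemma piFinset_nsmul {ι : Type*} [Fintype ι] [DecidableEq ι] {α : ι → Type*}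
    [∀ i, AddCommMonoid (α i)] [∀ i, DecidableEq (α i)] (S : ∀ i, Finset (α i)) :
    ∀ m : ℕ, 1 ≤ m → m • Fintype.piFinset S = Fintype.piFinset (fun i => m • S i) := by
  intro m hm
  induction m with
  | zero => omega
  | succ k ih =>
    rcases Nat.eq_zero_or_pos k with hk | hk
    · subst hk; simp [one_nsmul]
    · have he : (fun i => (k + 1) • S i) = fun i => k • S i + S i := by
        funext i; rw [succ_nsmul]
      rw [succ_nsmul, ih hk, he, Fintype.piFinset_add]

end GenericGroup

/-! ### The coordinate-lines gadget `T` -/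

section Tgadget

variable (p : ℕ) [NeZero p]

/-- The union of the coordinate lines in `(Fin s → ZMod p)`. -/
def Tset (s : ℕ) : Finset (Fin s → ZMod p) :=
  univ.filter (fun x => (univ.filter fun i => x i ≠ 0).card ≤ 1)

lemma zero_mem_Tset (s : ℕ) : (0 : Fin s → ZMod p) ∈ Tset p s := by
  simp [Tset]

lemma zero_mem_nsmul_Tset (s m : ℕ) : (0 : Fin s → ZMod p) ∈ m • Tset p s :=
  zero_mem_nsmul (zero_mem_Tset p s) m

lemma nsmul_Tset_support {s : ℕ} : ∀ m : ℕ, 1 ≤ m → ∀ x ∈ m • Tset p s,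
    (univ.filter fun i => x i ≠ 0).card ≤ m := by
  intro m hm
  induction m with
  | zero => omega
  | succ k ih =>
    rcases Nat.eq_zero_or_pos k with hk | hk
    · subst hk
      intro x hx
      rw [one_nsmul] at hx
      simpa [Tset] using (Finset.mem_filter.mp hx).2
    · intro x hx
      rw [succ_nsmul] at hx
      rw [Finset.mem_add] at hx
      obtain ⟨y, hy, z, hz, rfl⟩ := hx
      have hsub : (univ.filter fun i => (y + z) i ≠ 0) ⊆
          (univ.filter fun i => y i ≠ 0) ∪ (univ.filter fun i => z i ≠ 0) := by
        intro i hi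
        simp only [Finset.mem_filter, Finset.mem_univ, true_and, Pi.add_apply] at hi
        simp only [Finset.mem_union, Finset.mem_filter, Finset.mem_univ, true_and]
        by_contra hcon
        push_neg at hcon
        simp [hcon.1, hcon.2] at hi
      calc (univ.filter fun i => (y + z) i ≠ 0).card
          ≤ ((univ.filter fun i => y i ≠ 0) ∪ (univ.filter fun i => z i ≠ 0)).card :=
            Finset.card_le_card hsub
        _ ≤ (univ.filter fun i => y i ≠ 0).card + (univ.filter fun i => z i ≠ 0).card :=
            Finset.card_union_le _ _
        _ ≤ k + 1 := by
            have h1 := ih hk y hy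
            have h2 : (univ.filter fun i => z i ≠ 0).card ≤ 1 := by
              simpa [Tset] using (Finset.mem_filter.mp hz).2
            omega

lemma nsmul_Tset_ne_univ {s : ℕ} (hp : 2 ≤ p) {m : ℕ} (hm : 1 ≤ m) (hms : m < s) :
    m • Tset p s ≠ (univ : Finset (Fin s → ZMod p)) := by
  intro hcon
  haveI : Fact (1 < p) := ⟨hp⟩
  have h1 : ((fun _ => 1 : Fin s → ZMod p)) ∈ m • Tset p s := by
    rw [hcon]; exact Finset.mem_univ _
  have := nsmul_Tset_support p m hm _ h1
  have hall : (univ.filter fun i : Fin s => (1 : ZMod p) ≠ 0) = univ := by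
    simp [one_ne_zero]
  rw [hall] at this
  simp only [Finset.card_univ, Fintype.card_fin] at this
  omega

lemma nsmul_Tset_eq_univ {s m : ℕ} (hm : s ≤ m) :
    m • Tset p s = (univ : Finset (Fin s → ZMod p)) := by
  have hbase : s • Tset p s = (univ : Finset (Fin s → ZMod p)) := by
    apply Finset.Subset.antisymm (Finset.subset_univ _)
    intro x _
    have hx : x = ∑ i : Fin s, (Pi.single i (x i) : Fin s → ZMod p) := by
      funext j
      rw [Finset.sum_apply]
      simp [Pi.single_apply]
    have hsingle : ∀ i ∈ (univ : Finset (Fin s)), (Pi.single i (x i) : Fin s → ZMod p) ∈ Tset p s := by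
      intro i _
      simp only [Tset, Finset.mem_filter, Finset.mem_univ, true_and]
      calc (univ.filter fun j => (Pi.single i (x i) : Fin s → ZMod p) j ≠ 0).card
          ≤ ({i} : Finset (Fin s)).card := by
            apply Finset.card_le_card
            intro j hj
            simp only [Finset.mem_filter, Finset.mem_univ, true_and] at hj
            simp only [Finset.mem_singleton]
            by_contra hne
            exact hj (Pi.single_eq_of_ne hne _)
        _ = 1 := Finset.card_singleton i
    have hmem := sum_mem_card_nsmul (univ : Finset (Fin s)) (fun i => (Pi.single i (x i) : Fin s → ZMod p)) hsingle
    rw [Finset.card_univ, Fintype.card_fin] at hmem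
    rw [hx]
    exact hmem
  rw [← Nat.sub_add_cancel hm, add_nsmul, hbase,
    add_univ_eq ⟨0, zero_mem_nsmul_Tset p s (m - s)⟩]

lemma card_fun_zmod (s : ℕ) : Fintype.card (Fin s → ZMod p) = p ^ s := by
  rw [Fintype.card_fun, ZMod.card, Fintype.card_fin]

lemma card_nsmul_Tset_eq {s m : ℕ} (hm : s ≤ m) : (m • Tset p s).card = p ^ s := by
  rw [nsmul_Tset_eq_univ p hm, Finset.card_univ, card_fun_zmod]

lemma card_nsmul_Tset_le (s m : ℕ) : (m • Tset p s).card ≤ p ^ s := by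
  calc (m • Tset p s).card ≤ Fintype.card (Fin s → ZMod p) := Finset.card_le_univ _
    _ = p ^ s := card_fun_zmod p s

lemma card_nsmul_Tset_lt {s m : ℕ} (hp : 2 ≤ p) (hm : 1 ≤ m) (hms : m < s) :
    (m • Tset p s).card ≤ p ^ s - 1 := by
  have h1 : (m • Tset p s).card < Fintype.card (Fin s → ZMod p) := by
    apply Finset.card_lt_card
    rw [Finset.ssubset_univ_iff]
    exact nsmul_Tset_ne_univ p hp hm hms
  rw [card_fun_zmod] at h1
  omega

lemma card_nsmul_Tset_pos (s m : ℕ) : 1 ≤ (m • Tset p s).card :=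
  Finset.card_pos.mpr ⟨0, zero_mem_nsmul_Tset p s m⟩

end Tgadget

/-! ### Arithmetic lemmas -/

lemma two_term_binomial (a b : ℕ) : ∀ k : ℕ, a ^ (k + 1) + (k + 1) * a ^ k * b ≤ (a + b) ^ (k + 1) := by
  intro k
  induction k with
  | zero => simp
  | succ k ih =>
    have h2 : (a ^ (k + 1) + (k + 1) * a ^ k * b) * (a + b) ≤ (a + b) ^ (k + 1) * (a + b) :=
      Nat.mul_le_mul_right _ ih
    have e1 : (a ^ (k + 1) + (k + 1) * a ^ k * b) * (a + b)
        = a ^ (k + 1 + 1) + (k + 1 + 1) * a ^ (k + 1) * b + (k + 1) * a ^ k * (b * b) := by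
      ring
    calc a ^ (k + 1 + 1) + (k + 1 + 1) * a ^ (k + 1) * b
        ≤ (a ^ (k + 1) + (k + 1) * a ^ k * b) * (a + b) := by
          rw [e1]; exact Nat.le_add_right _ _
      _ ≤ (a + b) ^ (k + 1) * (a + b) := h2
      _ = (a + b) ^ (k + 1 + 1) := by ring

lemma arith_key {q L P δ : ℕ} (hq : 2 ≤ q) (hP : P < 2 ^ L) (hδ : q * L ≤ δ) :
    (q - 1) ^ δ * P < q ^ δ := by
  set a := q - 1 with ha
  have haq : a + 1 = q := by omega
  have ha1 : 1 ≤ a := by omega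
  have hq1 : q - 1 + 1 = q := by omega
  -- 2 * a^q ≤ q^q
  have hstep : 2 * a ^ q ≤ q ^ q := by
    have h0 := two_term_binomial a 1 (q - 1)
    rw [hq1] at h0
    rw [mul_one] at h0
    have haa : a ^ q = a ^ (q - 1) * a := by rw [← pow_succ, hq1]
    have h1 : a ^ q ≤ q * a ^ (q - 1) := by
      rw [haa]
      calc a ^ (q - 1) * a ≤ a ^ (q - 1) * q := Nat.mul_le_mul_left _ (by omega)
        _ = q * a ^ (q - 1) := Nat.mul_comm _ _
    linarith
  -- 2^L * a^(q*L) ≤ q^(q*L)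
  have hL : ∀ l : ℕ, 2 ^ l * a ^ (q * l) ≤ q ^ (q * l) := by
    intro l
    induction l with
    | zero => simp
    | succ m ih =>
      have e1 : q * (m + 1) = q * m + q := by ring
      calc 2 ^ (m + 1) * a ^ (q * (m + 1))
          = (2 ^ m * a ^ (q * m)) * (2 * a ^ q) := by rw [e1]; ring
        _ ≤ q ^ (q * m) * q ^ q := Nat.mul_le_mul ih hstep
        _ = q ^ (q * (m + 1)) := by rw [e1, pow_add]
  -- conclude
  have hsplit : q ^ δ = q ^ (q * L) * q ^ (δ - q * L) := by
    rw [← pow_add]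
    congr 1
    omega
  have hasplit : a ^ δ = a ^ (q * L) * a ^ (δ - q * L) := by
    rw [← pow_add]
    congr 1
    omega
  have hfin : a ^ δ * P < a ^ δ * 2 ^ L :=
    Nat.mul_lt_mul_of_pos_left hP (pow_pos (by omega) _)
  calc a ^ δ * P < a ^ δ * 2 ^ L := hfin
    _ = 2 ^ L * a ^ (q * L) * a ^ (δ - q * L) := by rw [hasplit]; ring
    _ ≤ q ^ (q * L) * a ^ (δ - q * L) := Nat.mul_le_mul_right _ (hL L)
    _ ≤ q ^ (q * L) * q ^ (δ - q * L) := by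
        apply Nat.mul_le_mul_left
        exact Nat.pow_le_pow_left (by omega) _
    _ = q ^ δ := hsplit.symm

lemma prod_fin_ite_lt {Wt ut : ℕ} (hu : ut ≤ Wt) (a b : ℕ) :
    ∏ m : Fin Wt, (if (m : ℕ) < ut then a else b) = a ^ ut * b ^ (Wt - ut) := by
  rw [Finset.prod_ite, Finset.prod_const, Finset.prod_const]
  have hcard : (univ.filter fun m : Fin Wt => (m : ℕ) < ut).card = ut := by
    have himg : (univ.filter fun m : Fin Wt => (m : ℕ) < ut).image Fin.val = Finset.range ut := by
      ext x
      simp only [Finset.mem_image, Finset.mem_filter, Finset.mem_univ, true_and,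
        Finset.mem_range]
      constructor
      · rintro ⟨m, hm, rfl⟩; exact hm
      · intro hx; exact ⟨⟨x, lt_of_lt_of_le hx hu⟩, hx, rfl⟩
    have := Finset.card_image_of_injective
      (univ.filter fun m : Fin Wt => (m : ℕ) < ut) Fin.val_injective
    rw [himg, Finset.card_range] at this
    omega
  have hcard2 : (univ.filter fun m : Fin Wt => ¬ ((m : ℕ) < ut)).card = Wt - ut := by
    have := Finset.card_filter_add_card_filter_not
      (s := (univ : Finset (Fin Wt))) (p := fun m : Fin Wt => (m : ℕ) < ut)
    rw [Finset.card_univ, Fintype.card_fin] at this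
    omega
  rw [hcard, hcard2]

/-! ### Assembling products -/

lemma prod_lt_prod_main {H' : ℕ} (t q Wf uj uk : Fin H' → ℕ) (i0 : Fin H')
    (hqpos : ∀ i, 1 ≤ q i) (htpos : ∀ i, 1 ≤ t i) (htq : ∀ i, t i ≤ q i)
    (hujW : ∀ i, uj i ≤ Wf i) (hukW : ∀ i, uk i ≤ Wf i)
    (hsat : ∀ i, i < i0 → t i = q i)
    (hmain : t i0 ^ uj i0 * q i0 ^ (Wf i0 - uj i0)
        * (∏ i ∈ univ.filter (fun i' => i0 < i'), q i ^ Wf i)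
      < t i0 ^ uk i0 * q i0 ^ (Wf i0 - uk i0)) :
    ∏ i, t i ^ uj i * q i ^ (Wf i - uj i) < ∏ i, t i ^ uk i * q i ^ (Wf i - uk i) := by
  classical
  set Fj := fun i => t i ^ uj i * q i ^ (Wf i - uj i) with hFj
  set Fk := fun i => t i ^ uk i * q i ^ (Wf i - uk i) with hFk
  set P := ∏ i ∈ univ.filter (fun i' => i0 < i'), q i ^ Wf i with hPdef
  set Q := ∏ i ∈ univ.filter (fun i' => i' < i0), q i ^ Wf i with hQdef
  have hsplitU : ∀ f : Fin H' → ℕ, ∏ i, f i = f i0 * ∏ i ∈ univ.erase i0, f i :=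
    fun f => (Finset.mul_prod_erase univ f (Finset.mem_univ i0)).symm
  have herase_lt : (univ.erase i0).filter (fun i' => i' < i0)
      = univ.filter (fun i' => i' < i0) := by
    ext x
    simp only [Finset.mem_filter, Finset.mem_erase, Finset.mem_univ, true_and, and_true]
    constructor
    · rintro ⟨_, hx⟩; exact hx
    · intro hx; exact ⟨Fin.ne_of_lt hx, hx⟩
  have herase_gt : (univ.erase i0).filter (fun i' => ¬ i' < i0)
      = univ.filter (fun i' => i0 < i') := by
    ext x
    simp only [Finset.mem_filter, Finset.mem_erase, Finset.mem_univ, true_and, and_true]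
    constructor
    · rintro ⟨hne, hx⟩
      exact lt_of_le_of_ne (not_lt.mp hx) (Ne.symm hne)
    · intro hx; exact ⟨ne_of_gt hx, not_lt.mpr (le_of_lt hx)⟩
  have hFle : ∀ i, Fj i ≤ q i ^ Wf i := by
    intro i
    calc Fj i ≤ q i ^ uj i * q i ^ (Wf i - uj i) :=
          Nat.mul_le_mul_right _ (Nat.pow_le_pow_left (htq i) _)
      _ = q i ^ Wf i := by
          rw [← pow_add]
          congr 1
          have := hujW i
          omega
  have hQpos : 0 < Q := Finset.prod_pos (fun i _ => pow_pos (hqpos i) _)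
  have hmain' : Fj i0 * P < Fk i0 := hmain
  have hQeq : Q = ∏ i ∈ univ.filter (fun i' => i' < i0), Fk i := by
    apply Finset.prod_congr rfl
    intro i hi
    have hlt : i < i0 := by
      simpa using (Finset.mem_filter.mp hi).2
    show q i ^ Wf i = t i ^ uk i * q i ^ (Wf i - uk i)
    rw [hsat i hlt, ← pow_add]
    congr 1
    have := hukW i
    omega
  calc ∏ i, Fj i = Fj i0 * ∏ i ∈ univ.erase i0, Fj i := hsplitU Fj
    _ ≤ Fj i0 * ∏ i ∈ univ.erase i0, q i ^ Wf i := by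
        apply Nat.mul_le_mul_left
        exact Finset.prod_le_prod' (fun i _ => hFle i)
    _ = Fj i0 * (Q * P) := by
        rw [← Finset.prod_filter_mul_prod_filter_not (univ.erase i0) (fun i' => i' < i0),
          herase_lt, herase_gt]
    _ = (Fj i0 * P) * Q := by ring
    _ < Fk i0 * Q := Nat.mul_lt_mul_of_pos_right hmain' hQpos
    _ ≤ Fk i0 * ∏ i ∈ univ.erase i0, Fk i := by
        apply Nat.mul_le_mul_left
        calc Q = Q * 1 := (mul_one Q).symm
          _ ≤ (∏ i ∈ (univ.erase i0).filter (fun i' => i' < i0), Fk i)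
              * (∏ i ∈ (univ.erase i0).filter (fun i' => ¬ i' < i0), Fk i) := by
              apply Nat.mul_le_mul
              · rw [herase_lt, hQeq]
              · apply Finset.one_le_prod'
                intro i _
                exact Nat.one_le_iff_ne_zero.mpr
                  (Nat.mul_ne_zero (Nat.pos_iff_ne_zero.mp (pow_pos (htpos i) _))
                    (Nat.pos_iff_ne_zero.mp (pow_pos (hqpos i) _)))
          _ = ∏ i ∈ univ.erase i0, Fk i :=
              Finset.prod_filter_mul_prod_filter_not _ _ _
    _ = ∏ i, Fk i := (hsplitU Fk).symm

/-! ### The construction -/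

section Construction

variable (p n H : ℕ)

/-- The large constant. -/
def Cc : ℕ := p ^ (H + 1) * (p * H * (H + 1) * n + 1)

/-- Weights, decreasing in `i`. -/
def w (i : Fin H) : ℕ := Cc p n H ^ (H - (i : ℕ))

/-- The number of slots for gadget `i`. -/
def Wd (i : Fin H) : ℕ := w p n H i * (n - 1)

/-- Slot index type. -/
abbrev Slot := (i : Fin H) × Fin (Wd p n H i)

/-- Dimension of each slot. -/
abbrev dims (s : Slot p n H) : ℕ := (s.1 : ℕ) + 2

variable (σ : Fin H → Equiv.Perm (Fin n))

/-- Number of `T`-slots used by `A j` in gadget `i`. -/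
def uu (j : Fin n) (i : Fin H) : ℕ := w p n H i * (n - 1 - (σ i j : ℕ))

lemma uu_le (j : Fin n) (i : Fin H) : uu p n H σ j i ≤ Wd p n H i :=
  Nat.mul_le_mul_left _ (by omega)

variable [NeZero p]

/-- Content of each slot. -/
def slotSet (j : Fin n) (s : Slot p n H) : Finset (Fin (dims p n H s) → ZMod p) :=
  if (s.2 : ℕ) < uu p n H σ j s.1 then Tset p (dims p n H s) else univ

/-- The set `A_j`, before transport. -/
def A0 (j : Fin n) : Finset (∀ s : Slot p n H, Fin (dims p n H s) → ZMod p) :=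
  Fintype.piFinset (slotSet p n H σ j)

lemma card_nsmul_A0 {h : ℕ} (hh : 1 ≤ h) (j : Fin n) :
    (h • A0 p n H σ j).card
      = ∏ i : Fin H, ((h • Tset p ((i : ℕ) + 2)).card ^ uu p n H σ j i
          * (p ^ ((i : ℕ) + 2)) ^ (Wd p n H i - uu p n H σ j i)) := by
  rw [A0, piFinset_nsmul _ h hh, Fintype.card_piFinset]
  rw [← Finset.univ_sigma_univ, Finset.prod_sigma]
  apply Finset.prod_congr rfl
  intro i _
  have hpt : ∀ m : Fin (Wd p n H i), (h • slotSet p n H σ j ⟨i, m⟩).card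
      = if (m : ℕ) < uu p n H σ j i then (h • Tset p ((i : ℕ) + 2)).card
        else p ^ ((i : ℕ) + 2) := by
    intro m
    rw [slotSet]
    split
    · rfl
    · rw [nsmul_univ_eq h hh, Finset.card_univ, card_fun_zmod]
  calc ∏ m : Fin (Wd p n H i), (h • slotSet p n H σ j ⟨i, m⟩).card
      = ∏ m : Fin (Wd p n H i), (if (m : ℕ) < uu p n H σ j i
          then (h • Tset p ((i : ℕ) + 2)).card else p ^ ((i : ℕ) + 2)) :=
        Finset.prod_congr rfl (fun m _ => hpt m)
    _ = _ := prod_fin_ite_lt (uu_le p n H σ j i) _ _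

lemma Cc_pos (hp : 1 ≤ p) : 1 ≤ Cc p n H :=
  Nat.one_le_iff_ne_zero.mpr (Nat.mul_ne_zero
    (Nat.pos_iff_ne_zero.mp (pow_pos hp _))
    (Nat.succ_ne_zero _))

lemma main_step {t q W u δ P : ℕ} (ht : 1 ≤ t) (hq : 1 ≤ q)
    (hused : u + δ ≤ W) (hkey : t ^ δ * P < q ^ δ) :
    t ^ (u + δ) * q ^ (W - (u + δ)) * P < t ^ u * q ^ (W - u) := by
  have hsub : W - u = (W - (u + δ)) + δ := by omega
  rw [hsub, pow_add, pow_add]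
  have hcpos : 0 < t ^ u * q ^ (W - (u + δ)) :=
    Nat.mul_pos (pow_pos ht _) (pow_pos hq _)
  calc t ^ u * t ^ δ * q ^ (W - (u + δ)) * P
      = (t ^ u * q ^ (W - (u + δ))) * (t ^ δ * P) := by ring
    _ < (t ^ u * q ^ (W - (u + δ))) * q ^ δ := Nat.mul_lt_mul_of_pos_left hkey hcpos
    _ = t ^ u * (q ^ (W - (u + δ)) * q ^ δ) := by ring

lemma main_lt (hp : 2 ≤ p) {h : ℕ} (h1 : 1 ≤ h) (hH : h ≤ H)
    {j k : Fin n}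
    (hjk : ((σ ⟨h - 1, Nat.lt_of_lt_of_le (Nat.sub_lt h1 Nat.one_pos) hH⟩ j : Fin n) : ℕ) <
      ((σ ⟨h - 1, Nat.lt_of_lt_of_le (Nat.sub_lt h1 Nat.one_pos) hH⟩ k : Fin n) : ℕ)) :
    (h • A0 p n H σ j).card < (h • A0 p n H σ k).card := by
  rw [card_nsmul_A0 p n H σ h1 j, card_nsmul_A0 p n H σ h1 k]
  have hppos : 0 < p := by omega
  set i0 : Fin H := ⟨h - 1, by omega⟩ with hi0
  have hi0v : (i0 : ℕ) = h - 1 := rfl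
  have hi0s : (i0 : ℕ) + 2 = h + 1 := by omega
  -- abbreviations
  set M := ∑ i ∈ univ.filter (fun i' => i0 < i'), (((i : ℕ) + 2) * Wd p n H i) with hMdef
  set L := p * M + 1 with hLdef
  set qq := p ^ ((i0 : ℕ) + 2) with hqqdef
  set tt := (h • Tset p ((i0 : ℕ) + 2)).card with httdef
  have hq2 : 2 ≤ qq := le_trans hp (Nat.le_self_pow (by omega) p)
  have htlt : tt ≤ qq - 1 := by
    rw [httdef, hqqdef]
    exact card_nsmul_Tset_lt p hp h1 (by omega)
  have httpos : 1 ≤ tt := card_nsmul_Tset_pos p _ h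
  -- the value of P
  have hPeq : (∏ i ∈ univ.filter (fun i' => i0 < i'),
      (p ^ ((i : ℕ) + 2)) ^ Wd p n H i) = p ^ M := by
    rw [hMdef, ← Finset.prod_pow_eq_pow_sum]
    exact Finset.prod_congr rfl (fun i _ => (pow_mul p _ _).symm)
  have hPlt : p ^ M < 2 ^ L := by
    calc p ^ M ≤ (2 ^ p) ^ M := Nat.pow_le_pow_left (le_of_lt (p.lt_two_pow_self)) M
      _ = 2 ^ (p * M) := by rw [← pow_mul]
      _ < 2 ^ L := Nat.pow_lt_pow_right one_lt_two (by omega)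
  -- bound on M
  have hM : M ≤ H * ((H + 1) * (Cc p n H ^ (H - h) * (n - 1))) := by
    have hb : ∀ i ∈ univ.filter (fun i' => i0 < i'),
        ((i : ℕ) + 2) * Wd p n H i ≤ (H + 1) * (Cc p n H ^ (H - h) * (n - 1)) := by
      intro i hi
      have hii : i0 < i := (Finset.mem_filter.mp hi).2
      have hival : h - 1 < (i : ℕ) := hii
      have hiH : (i : ℕ) < H := i.isLt
      apply Nat.mul_le_mul
      · omega
      · rw [Wd, w]
        apply Nat.mul_le_mul_right
        apply Nat.pow_le_pow_right (Cc_pos p n H (by omega))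
        omega
    calc M ≤ (univ.filter (fun i' => i0 < i')).card
          * ((H + 1) * (Cc p n H ^ (H - h) * (n - 1))) := by
          simpa using Finset.sum_le_card_nsmul _ _ _ hb
      _ ≤ H * ((H + 1) * (Cc p n H ^ (H - h) * (n - 1))) := by
          apply Nat.mul_le_mul_right
          calc (univ.filter (fun i' => i0 < i')).card
              ≤ (univ : Finset (Fin H)).card := Finset.card_filter_le _ _
            _ = H := by simp
  -- the key exponent bound
  have hqL : qq * L ≤ Cc p n H ^ (H - h + 1) := by
    have hX : 1 ≤ Cc p n H ^ (H - h) := Nat.one_le_iff_ne_zero.mpr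
      (Nat.pos_iff_ne_zero.mp (pow_pos (Cc_pos p n H (by omega)) _))
    have hpM : p * M ≤ (p * H * (H + 1) * (n - 1)) * Cc p n H ^ (H - h) := by
      calc p * M ≤ p * (H * ((H + 1) * (Cc p n H ^ (H - h) * (n - 1)))) :=
            Nat.mul_le_mul_left _ hM
        _ = (p * H * (H + 1) * (n - 1)) * Cc p n H ^ (H - h) := by ring
    have hL : L ≤ (p * H * (H + 1) * (n - 1) + 1) * Cc p n H ^ (H - h) := by
      have he : (p * H * (H + 1) * (n - 1) + 1) * Cc p n H ^ (H - h)
          = (p * H * (H + 1) * (n - 1)) * Cc p n H ^ (H - h) + Cc p n H ^ (H - h) := by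
        ring
      omega
    have hL2 : L ≤ (p * H * (H + 1) * n + 1) * Cc p n H ^ (H - h) := by
      apply le_trans hL
      apply Nat.mul_le_mul_right
      have : p * H * (H + 1) * (n - 1) ≤ p * H * (H + 1) * n :=
        Nat.mul_le_mul_left _ (by omega)
      omega
    have hqbound : qq ≤ p ^ (H + 1) := by
      rw [hqqdef, hi0s]
      exact Nat.pow_le_pow_right (by omega) (by omega)
    calc qq * L ≤ p ^ (H + 1) * ((p * H * (H + 1) * n + 1) * Cc p n H ^ (H - h)) :=
          Nat.mul_le_mul hqbound hL2
      _ = Cc p n H * Cc p n H ^ (H - h) := by rw [Cc]; ring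
      _ = Cc p n H ^ (H - h + 1) := by rw [pow_succ, mul_comm]
  -- delta decomposition
  have hkn : ((σ i0 k : Fin n) : ℕ) ≤ n - 1 := by
    have := (σ i0 k).isLt
    omega
  set δ := w p n H i0 * (((σ i0 k : Fin n) : ℕ) - ((σ i0 j : Fin n) : ℕ)) with hδdef
  have hδeq : uu p n H σ j i0 = uu p n H σ k i0 + δ := by
    rw [uu, uu, hδdef, ← Nat.mul_add]
    congr 1
    omega
  have hδge : qq * L ≤ δ := by
    apply le_trans hqL
    have hw : w p n H i0 = Cc p n H ^ (H - h + 1) := by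
      rw [w, hi0v]
      congr 1
      omega
    calc Cc p n H ^ (H - h + 1) = w p n H i0 * 1 := by rw [hw, mul_one]
      _ ≤ δ := by
        rw [hδdef]
        exact Nat.mul_le_mul_left _ (by omega)
  -- the key inequality
  have hkey : tt ^ δ * p ^ M < qq ^ δ :=
    calc tt ^ δ * p ^ M ≤ (qq - 1) ^ δ * p ^ M :=
        Nat.mul_le_mul_right _ (Nat.pow_le_pow_left htlt _)
      _ < qq ^ δ := arith_key hq2 hPlt hδge
  -- assemble
  apply prod_lt_prod_main
    (fun i => (h • Tset p ((i : ℕ) + 2)).card)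
    (fun i => p ^ ((i : ℕ) + 2))
    (Wd p n H) (uu p n H σ j) (uu p n H σ k) i0
  · intro i
    exact pow_pos hppos _
  · intro i
    exact card_nsmul_Tset_pos p _ h
  · intro i
    exact card_nsmul_Tset_le p _ h
  · intro i
    exact uu_le p n H σ j i
  · intro i
    exact uu_le p n H σ k i
  · intro i hilt
    have : (i : ℕ) < h - 1 := hilt
    exact card_nsmul_Tset_eq p (by omega)
  · -- main inequality
    rw [hPeq]
    have hujW : uu p n H σ j i0 ≤ Wd p n H i0 := uu_le p n H σ j i0
    rw [hδeq]
    exact main_step httpos (by omega) (by omega) hkey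

/-- The flat index type. -/
abbrev Idx := (s : Slot p n H) × Fin (dims p n H s)

/-- The dimension `N`. -/
def NN : ℕ := Fintype.card (Idx p n H)

/-- Transport to the concrete group. -/
noncomputable def EE : (∀ s : Slot p n H, Fin (dims p n H s) → ZMod p) ≃+ (Fin (NN p n H) → ZMod p) where
  toEquiv :=
    ((Equiv.piCurry fun (_ : Slot p n H) (_ : Fin _) => ZMod p).symm.trans
      ((Fintype.equivFin (Idx p n H)).arrowCongr (Equiv.refl (ZMod p))))
  map_add' := fun f g => rfl

end Construction

end Prop3Aux

open Pointwise

/-- **Proposition 3 (positive characteristic).** Let `p` be prime and `n, H ≥ 1`.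
There exists `N = N_p(n,H)` such that for any permutations `σ_1, …, σ_H` of `{1, …, n}`
there exist subsets `A_1, …, A_n ⊆ (ℤ/pℤ)^N` such that for each `1 ≤ h ≤ H` the
quantities `|hA_1|, …, |hA_n|` have the same relative order as `σ_h`. -/
theorem prop_positive_characteristic (p : ℕ) (hp : p.Prime) (n H : ℕ)
    (hn : 1 ≤ n) (hH : 1 ≤ H) :
    ∃ N : ℕ, ∀ σ : Fin H → Equiv.Perm (Fin n),
      ∃ A : Fin n → Finset (Fin N → ZMod p),
        ∀ h : ℕ, ∀ h1 : 1 ≤ h, ∀ hhH : h ≤ H, ∀ j k : Fin n,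
          (h • A j).card < (h • A k).card ↔
            σ ⟨h - 1, by omega⟩ j < σ ⟨h - 1, by omega⟩ k := by
  haveI : NeZero p := ⟨hp.ne_zero⟩
  have hp2 : 2 ≤ p := hp.two_le
  refine ⟨Prop3Aux.NN p n H, fun σ => ?_⟩
  refine ⟨fun j => (Prop3Aux.A0 p n H σ j).image (Prop3Aux.EE p n H), ?_⟩
  intro h h1 hhH j k
  have hcard : ∀ j' : Fin n,
      (h • (Prop3Aux.A0 p n H σ j').image (Prop3Aux.EE p n H)).card
        = (h • Prop3Aux.A0 p n H σ j').card := by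
    intro j'
    rw [← Prop3Aux.image_nsmul_hom (Prop3Aux.EE p n H) _ h h1]
    exact Finset.card_image_of_injective _ (Prop3Aux.EE p n H).injective
  rw [hcard j, hcard k]
  constructor
  · intro hlt
    rcases lt_trichotomy (σ ⟨h - 1, by omega⟩ j) (σ ⟨h - 1, by omega⟩ k) with hc | hc | hc
    · exact hc
    · exfalso
      have : j = k := (σ _).injective hc
      subst this
      exact lt_irrefl _ hlt
    · exfalso
      have hrev := Prop3Aux.main_lt p n H σ hp2 h1 hhH (j := k) (k := j) hc
      exact lt_asymm hlt hrev
  · intro hlt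
    exact Prop3Aux.main_lt p n H σ hp2 h1 hhH hlt
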